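/- No two distinct members of the list of normal forms d_∞, d_*, d_#, and d_λ (λ ∈ K) are equivalent: d_∞, d_* and d_# are pairwise inequivalent, and none of d_∞, d_*, d_# is equivalent to d_λ for any λ ∈ K. -/
import Mathlib


namespace LinfClassification

variable {K : Type*} [Field K] [CharZero K]

/-- A degree-(m+2) structure `((a₁,a₂),(a₃,a₄),(a₅,a₆))` on the 1|2-dimensional
graded space, encoding the odd coderivation
`d = a₁ψ^{1,0,m+1}_3 + a₂ψ^{0,1,m+1}_3 + a₃ψ^{0,0,m+2}_1 + a₄ψ^{0,0,m+2}_2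
 + a₅ψ^{1,1,m}_1 + a₆ψ^{1,1,m}_2`. -/
abbrev Str (K : Type*) := (K × K) × (K × K) × (K × K)

/-- The six codifferential equations expressing `[d,d] = 0`. -/
def IsCodiff (m : ℕ) (d : Str K) : Prop :=
  d.1.1 * d.2.2.1 + d.1.2 * d.2.2.2 = 0 ∧
  d.1.1 * d.2.1.1 + d.1.2 * d.2.1.2 = 0 ∧
  d.2.1.1 * (d.2.2.1 + ((m : K) + 2) * d.1.2) = 0 ∧
  d.2.1.2 * (d.2.2.1 + ((m : K) + 2) * d.1.2) = 0 ∧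
  d.2.1.1 * (d.2.2.2 - ((m : K) + 2) * d.1.1) = 0 ∧
  d.2.1.2 * (d.2.2.2 - ((m : K) + 2) * d.1.1) = 0

/-- Action of `(g, q) ∈ GL₂(K) × Kˣ` with `g = [[p, q'], [r, s]]`
(`det g = p·s - q'·r ≠ 0`) and scalar `t ≠ 0` on a degree-(m+2) structure:
`(g,t)·(u,v,w) = (tᵐ·(u g), t^{m+2}·g⁻¹ v, det(g)·tᵐ·g⁻¹ w)`,
`u` a row vector and `v, w` column vectors. -/
def act (m : ℕ) (p q r s t : K) (d : Str K) : Str K :=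
  ((t ^ m * (d.1.1 * p + d.1.2 * r), t ^ m * (d.1.1 * q + d.1.2 * s)),
   (t ^ (m + 2) * (p * s - q * r)⁻¹ * (s * d.2.1.1 - q * d.2.1.2),
    t ^ (m + 2) * (p * s - q * r)⁻¹ * (-r * d.2.1.1 + p * d.2.1.2)),
   (t ^ m * (s * d.2.2.1 - q * d.2.2.2),
    t ^ m * (-r * d.2.2.1 + p * d.2.2.2)))

/-- Linear equivalence: two degree-(m+2) structures lie in the same orbit. -/
def Equiv' (m : ℕ) (d d' : Str K) : Prop :=
  ∃ p q r s t : K, p * s - q * r ≠ 0 ∧ t ≠ 0 ∧ act m p q r s t d = d'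

/-- The normal form `d_∞ = ψ^{1,1,m}_1`. -/
def dInf : Str K := ((0, 0), (0, 0), (1, 0))

/-- The normal form `d_λ = ψ^{0,1,m+1}_3 + λψ^{1,1,m}_1`. -/
def dLam (lam : K) : Str K := ((0, 1), (0, 0), (lam, 0))

/-- The normal form `d_* = ψ^{0,0,m+2}_1`. -/
def dStar : Str K := ((0, 0), (1, 0), (0, 0))

/-- The normal form `d_# = ψ^{0,1,m+1}_3 + ψ^{0,0,m+2}_1 - (m+2)ψ^{1,1,m}_1`. -/
def dSharp (m : ℕ) : Str K := ((0, 1), (1, 0), (-((m : K) + 2), 0))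

/-- No two distinct normal forms are equivalent: `d_∞`, `d_*`, `d_#` are pairwise
inequivalent, and none of them is equivalent to `d_λ` for any `λ ∈ K`. -/
theorem normal_forms_inequivalent (m : ℕ) :
    ¬ Equiv' m (dInf : Str K) dStar ∧
    ¬ Equiv' m (dInf : Str K) (dSharp m) ∧
    ¬ Equiv' m (dStar : Str K) (dSharp m) ∧
    (∀ lam : K,
      ¬ Equiv' m dInf (dLam lam) ∧
      ¬ Equiv' m dStar (dLam lam) ∧
      ¬ Equiv' m (dSharp m) (dLam lam)) := by
  have key : ∀ (d' : Str K), d'.1.2 = 1 → ¬ Equiv' m (dInf : Str K) d' ∧ ¬ Equiv' m (dStar : Str K) d' := by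
    intro d' hd'
    constructor <;> rintro ⟨p, q, r, s, t, hdet, ht, heq⟩ <;>
      [skip; skip] <;>
      · have h2 := congrArg (fun x : Str K => x.1.2) heq
        simp [act, dInf, dStar, hd'] at h2
  have vkey : ∀ (d d' : Str K), d.2.1 = (1, 0) → d'.2.1 = (0, 0) → ¬ Equiv' m d d' := by
    rintro d d' hd hd' ⟨p, q, r, s, t, hdet, ht, heq⟩
    have h3 := congrArg (fun x : Str K => x.2.1.1) heq
    have h4 := congrArg (fun x : Str K => x.2.1.2) heq
    simp [act, hd, hd'] at h3 h4
    have ht2 : t ^ (m + 2) ≠ 0 := pow_ne_zero _ ht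
    have hinv : ((p * s - q * r)⁻¹ : K) ≠ 0 := inv_ne_zero hdet
    have hs : s = 0 := h3.resolve_left (by rintro (h | h); exacts [ht h, hdet h])
    have hr : r = 0 := h4.resolve_left (by rintro (h | h); exacts [ht h, hdet h])
    exact hdet (by rw [hs, hr]; ring)
  refine ⟨?_, (key (dSharp m) rfl).1, (key (dSharp m) rfl).2, fun lam =>
    ⟨(key (dLam lam) rfl).1, (key (dLam lam) rfl).2, vkey _ _ rfl rfl⟩⟩
  rintro ⟨p, q, r, s, t, hdet, ht, heq⟩
  have h3 := congrArg (fun x : Str K => x.2.1.1) heq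
  simp [act, dInf, dStar] at h3

end LinfClassification
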